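/- For any fixed finite alphabet X of size k and fixed S ⊆ X × X, the class of k-letter graphs over (X, S), labelled by a well-quasi-ordered set of labels, is well-quasi-ordered by the labelled induced subgraph relation. -/

import Mathlib

/-- The letter graph of the word `w : Fin m → X` with respect to the relation
`R` on the alphabet `X`: vertices are positions, and `p ~ q` for `p ≤ q`
iff `(w p, w q) ∈ R`. -/
def letterGraphOf {X : Type*} {m : ℕ} (R : X → X → Prop) (w : Fin m → X) :
    SimpleGraph (Fin m) :=
  SimpleGraph.fromRel (fun p q => p ≤ q ∧ R (w p) (w q))

/-- The pointwise order on `Fin k × W`: equal letters, increasing labels. -/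
def letterRel (k : ℕ) (W : Type*) [Preorder W] :
    (Fin k × W) → (Fin k × W) → Prop :=
  fun p q => p.1 = q.1 ∧ p.2 ≤ q.2

instance letterRel_refl (k : ℕ) (W : Type*) [Preorder W] :
    Std.Refl (letterRel k W) :=
  ⟨fun _ => ⟨rfl, le_refl _⟩⟩

instance letterRel_trans (k : ℕ) (W : Type*) [Preorder W] :
    IsTrans (Fin k × W) (letterRel k W) :=
  ⟨fun _ _ _ h1 h2 => ⟨h1.1.trans h2.1, h1.2.trans h2.2⟩⟩

instance letterRel_preorder (k : ℕ) (W : Type*) [Preorder W] :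
    IsPreorder (Fin k × W) (letterRel k W) where
  refl := (letterRel_refl k W).refl
  trans := (letterRel_trans k W).trans

theorem letterRel_pwo (k : ℕ) (W : Type*) [Preorder W]
    (hW : ∀ g : ℕ → W, ∃ i j : ℕ, i < j ∧ g i ≤ g j) :
    (Set.univ : Set (Fin k × W)).PartiallyWellOrderedOn (letterRel k W) := by
  rw [Set.partiallyWellOrderedOn_iff_exists_lt]
  intro g _
  obtain ⟨a, ha⟩ := Finite.exists_infinite_fiber (fun n => (g n).1)
  have hinf : {n | (g n).1 = a}.Infinite := by
    rw [Set.infinite_coe_iff] at ha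
    exact ha
  set p : ℕ → Prop := fun n => (g n).1 = a with hp
  obtain ⟨i, j, hij, hle⟩ := hW (fun n => (g (Nat.nth p n)).2)
  refine ⟨Nat.nth p i, Nat.nth p j, (Nat.nth_lt_nth hinf).2 hij, ?_, hle⟩
  have hi : (g (Nat.nth p i)).1 = a := Nat.nth_mem_of_infinite hinf i
  have hj : (g (Nat.nth p j)).1 = a := Nat.nth_mem_of_infinite hinf j
  rw [hi, hj]

/-- Petkovšek: for a fixed finite alphabet `Fin k` and fixed
relation `R`, the `W`-labelled k-letter graphs over `(Fin k, R)` are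
well-quasi-ordered by the labelled induced subgraph relation, whenever the
label set `W` is a well-quasi-ordered quasi-order (every infinite sequence in
`W` has an increasing pair). A labelled letter graph is given by a word
together with a labelling of its positions; a labelled induced subgraph
embedding is an injective map preserving adjacency, non-adjacency, and
increasing the labels. -/
theorem letter_graphs_labelled_wqo (k : ℕ) (R : Fin k → Fin k → Prop)
    (W : Type*) [Preorder W]
    (hW : ∀ g : ℕ → W, ∃ i j : ℕ, i < j ∧ g i ≤ g j)
    (f : ℕ → Σ m : ℕ, (Fin m → Fin k) × (Fin m → W)) :
    ∃ i j : ℕ, i < j ∧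
      ∃ φ : Fin (f i).1 → Fin (f j).1,
        Function.Injective φ ∧
        (∀ u v : Fin (f i).1,
          (letterGraphOf R (f i).2.1).Adj u v ↔
          (letterGraphOf R (f j).2.1).Adj (φ u) (φ v)) ∧
        (∀ u : Fin (f i).1, (f i).2.2 u ≤ (f j).2.2 (φ u)) := by
  have higman := Set.PartiallyWellOrderedOn.partiallyWellOrderedOn_sublistForall₂
    (letterRel k W) (letterRel_pwo k W hW)
  obtain ⟨i, j, hij, hsub⟩ := higman.exists_lt
    (f := fun n => List.ofFn (fun p => ((f n).2.1 p, (f n).2.2 p)))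
    (fun n x _ => Set.mem_univ x)
  rw [List.sublistForall₂_iff] at hsub
  obtain ⟨l, hfa, hsl⟩ := hsub
  rw [List.sublist_iff_exists_fin_orderEmbedding_get_eq] at hsl
  obtain ⟨e, he⟩ := hsl
  rw [List.forall₂_iff_get] at hfa
  obtain ⟨hlen, hget⟩ := hfa
  simp only [List.length_ofFn] at hlen
  have h' : (f i).1 = l.length := hlen
  have hLj : (List.ofFn (fun p => ((f j).2.1 p, (f j).2.2 p))).length = (f j).1 :=
    List.length_ofFn
  set ψ : Fin (f i).1 → Fin (f j).1 :=
    fun u => Fin.cast hLj (e (Fin.cast h' u)) with hψ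
  -- key pointwise fact
  have key : ∀ u : Fin (f i).1, letterRel k W ((f i).2.1 u, (f i).2.2 u)
      ((f j).2.1 (ψ u), (f j).2.2 (ψ u)) := by
    intro u
    have hu1 : (u : ℕ) < (List.ofFn (fun p => ((f i).2.1 p, (f i).2.2 p))).length := by
      simp only [List.length_ofFn]; exact u.2
    have hu2 : (u : ℕ) < l.length := h' ▸ u.2
    have h1 := hget u hu1 hu2
    have hgi : (List.ofFn (fun p => ((f i).2.1 p, (f i).2.2 p))).get ⟨u, hu1⟩
        = ((f i).2.1 u, (f i).2.2 u) := by
      rw [List.get_ofFn]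
      exact congrArg (fun x => ((f i).2.1 x, (f i).2.2 x)) (Fin.ext rfl)
    have h2 := he ⟨u, hu2⟩
    have hgj : (List.ofFn (fun p => ((f j).2.1 p, (f j).2.2 p))).get (e ⟨u, hu2⟩)
        = ((f j).2.1 (ψ u), (f j).2.2 (ψ u)) := by
      rw [List.get_ofFn]
      have : Fin.cast (by simp) (e ⟨(u : ℕ), hu2⟩) = ψ u := by
        apply Fin.ext
        simp [hψ]
        congr 1
      rw [this]
    have hmk : (⟨(u : ℕ), hu2⟩ : Fin l.length) = Fin.cast h' u := rfl
    rw [hgi] at h1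
    rw [hmk, ← hmk, h2, hgj] at h1
    exact h1
  have hval : ∀ u : Fin (f i).1, (ψ u : ℕ) = (e (Fin.cast h' u) : ℕ) := fun u => rfl
  have hinj : Function.Injective ψ := by
    intro u v huv
    have : e (Fin.cast h' u) = e (Fin.cast h' v) := by
      apply Fin.ext
      rw [← hval u, ← hval v, huv]
    have h2 := e.injective this
    have hv : (u : ℕ) = (v : ℕ) := by
      have := congrArg Fin.val h2
      simpa using this
    exact Fin.ext hv
  have hle : ∀ u v : Fin (f i).1, (u ≤ v ↔ ψ u ≤ ψ v) := by
    intro u v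
    rw [Fin.le_def, Fin.le_def, hval u, hval v]
    rw [show ((e (Fin.cast h' u) : ℕ) ≤ (e (Fin.cast h' v) : ℕ)) ↔
        e (Fin.cast h' u) ≤ e (Fin.cast h' v) from (Fin.le_def).symm]
    rw [e.le_iff_le]
    exact (Fin.le_def).symm.trans Iff.rfl
  refine ⟨i, j, hij, ψ, hinj, ?_, fun u => (key u).2⟩
  intro u v
  have hlu := (key u).1
  have hlv := (key v).1
  simp only at hlu hlv
  simp only [letterGraphOf, SimpleGraph.fromRel_adj]
  rw [← hlu, ← hlv, ← hle u v, ← hle v u, hinj.ne_iff]
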